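/- For every natural number ℓ ≥ 10, with d_j = (1-λ)(ℓ+1+ℓj-j²) + λ(ℓ+2)²/4 and λ = 2(√2-1)/ℓ, the ratio ((ℓ+1)·∑_{i=0}^{ℓ} d_i²) / (∑_{i=0}^{ℓ} d_i)² is at most 6/5. -/

import Mathlib

private lemma sum_poly4 (a b c e f : ℝ) (m : ℕ) :
    ∑ i ∈ Finset.range m,
        (a + b * (i : ℝ) + c * (i : ℝ) ^ 2 + e * (i : ℝ) ^ 3 + f * (i : ℝ) ^ 4)
      = (m : ℝ) * a + b * ((m : ℝ) * ((m : ℝ) - 1) / 2)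
        + c * ((m : ℝ) * ((m : ℝ) - 1) * (2 * (m : ℝ) - 1) / 6)
        + e * ((m : ℝ) ^ 2 * ((m : ℝ) - 1) ^ 2 / 4)
        + f * ((m : ℝ) * ((m : ℝ) - 1) * (2 * (m : ℝ) - 1)
            * (3 * (m : ℝ) ^ 2 - 3 * (m : ℝ) - 1) / 30) := by
  induction m with
  | zero => simp
  | succ k ih =>
    rw [Finset.sum_range_succ, ih]
    push_cast
    ring

set_option maxHeartbeats 2000000 in
theorem second_moment_ratio_bound (ℓ : ℕ) (hℓ : 10 ≤ ℓ) :
    let lam : ℝ := 2 * (Real.sqrt 2 - 1) / (ℓ : ℝ)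
    let d : ℕ → ℝ := fun i =>
      (1 - lam) * ((ℓ : ℝ) + 1 + (ℓ : ℝ) * (i : ℝ) - (i : ℝ) ^ 2) + lam * ((ℓ : ℝ) + 2) ^ 2 / 4
    ((ℓ : ℝ) + 1) * (∑ i ∈ Finset.range (ℓ + 1), (d i) ^ 2) /
        (∑ i ∈ Finset.range (ℓ + 1), d i) ^ 2 ≤ 6 / 5 := by
  intro lam d
  set s : ℝ := Real.sqrt 2 - 1 with hs
  have hn : (10 : ℝ) ≤ (ℓ : ℝ) := by exact_mod_cast hℓ
  have hn0 : (0 : ℝ) < (ℓ : ℝ) := by linarith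
  have h2 : Real.sqrt 2 ^ 2 = 2 := Real.sq_sqrt (by norm_num)
  have hsq2lb : (1.41 : ℝ) < Real.sqrt 2 := by
    nlinarith [Real.sqrt_nonneg 2, h2]
  have hsq2ub : Real.sqrt 2 < 1.42 := by
    nlinarith [Real.sqrt_nonneg 2, h2]
  have hs0 : (0 : ℝ) < s := by rw [hs]; linarith
  have hs12 : s < 1 / 2 := by rw [hs]; linarith
  have hs2 : s ^ 2 = 1 - 2 * s := by rw [hs]; linear_combination h2
  have hlam : lam = 2 * s / (ℓ : ℝ) := rfl
  set n : ℝ := (ℓ : ℝ) with hnn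
  -- coefficients of d as a quadratic in i
  set a : ℝ := (1 - lam) * (n + 1) + lam * (n + 2) ^ 2 / 4 with ha
  set b : ℝ := (1 - lam) * n with hb
  set c : ℝ := -(1 - lam) with hc
  have hm : ((ℓ + 1 : ℕ) : ℝ) = n + 1 := by push_cast; ring
  have hS1 : ∑ i ∈ Finset.range (ℓ + 1), d i
      = (n + 1) * a + b * ((n + 1) * n / 2) + c * ((n + 1) * n * (2 * (n + 1) - 1) / 6) := by
    have hcongr : ∀ i ∈ Finset.range (ℓ + 1),
        d i = a + b * (i : ℝ) + c * (i : ℝ) ^ 2 + 0 * (i : ℝ) ^ 3 + 0 * (i : ℝ) ^ 4 := by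
      intro i _
      show (1 - lam) * (n + 1 + n * (i : ℝ) - (i : ℝ) ^ 2) + lam * (n + 2) ^ 2 / 4 = _
      rw [ha, hb, hc]; ring
    rw [Finset.sum_congr rfl hcongr, sum_poly4, hm]
    ring
  have hS2 : ∑ i ∈ Finset.range (ℓ + 1), (d i) ^ 2
      = (n + 1) * a ^ 2 + (2 * a * b) * ((n + 1) * n / 2)
        + (b ^ 2 + 2 * a * c) * ((n + 1) * n * (2 * (n + 1) - 1) / 6)
        + (2 * b * c) * ((n + 1) ^ 2 * n ^ 2 / 4)
        + c ^ 2 * ((n + 1) * n * (2 * (n + 1) - 1) * (3 * (n + 1) ^ 2 - 3 * (n + 1) - 1) / 30) := by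
    have hcongr : ∀ i ∈ Finset.range (ℓ + 1),
        (d i) ^ 2 = a ^ 2 + (2 * a * b) * (i : ℝ) + (b ^ 2 + 2 * a * c) * (i : ℝ) ^ 2
          + (2 * b * c) * (i : ℝ) ^ 3 + c ^ 2 * (i : ℝ) ^ 4 := by
      intro i _
      show ((1 - lam) * (n + 1 + n * (i : ℝ) - (i : ℝ) ^ 2) + lam * (n + 2) ^ 2 / 4) ^ 2 = _
      rw [ha, hb, hc]; ring
    rw [Finset.sum_congr rfl hcongr, sum_poly4, hm]
    ring
  rw [hS1, hS2]
  set S1 : ℝ := (n + 1) * a + b * ((n + 1) * n / 2) + c * ((n + 1) * n * (2 * (n + 1) - 1) / 6)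
    with hS1c
  set S2 : ℝ := (n + 1) * a ^ 2 + (2 * a * b) * ((n + 1) * n / 2)
        + (b ^ 2 + 2 * a * c) * ((n + 1) * n * (2 * (n + 1) - 1) / 6)
        + (2 * b * c) * ((n + 1) ^ 2 * n ^ 2 / 4)
        + c ^ 2 * ((n + 1) * n * (2 * (n + 1) - 1) * (3 * (n + 1) ^ 2 - 3 * (n + 1) - 1) / 30)
    with hS2c
  -- positivity of S1
  have hS1n : n * S1 = (12 * n + 4 * n * s + 22 * n ^ 2 + 6 * n ^ 2 * s + 12 * n ^ 3
      + 2 * n ^ 3 * s + 2 * n ^ 4) / 12 := by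
    rw [hS1c, ha, hb, hc, hlam]
    field_simp [hn0.ne']
    ring
  have hS1pos : 0 < S1 := by
    have hR : 0 < (12 * n + 4 * n * s + 22 * n ^ 2 + 6 * n ^ 2 * s + 12 * n ^ 3
        + 2 * n ^ 3 * s + 2 * n ^ 4) / 12 := by
      have h1 : 0 < n ^ 2 := by positivity
      have h3 : 0 < n ^ 3 := by positivity
      have h4 : 0 < n ^ 4 := by positivity
      nlinarith [mul_pos hn0 hs0, mul_pos h1 hs0, mul_pos h3 hs0]
    have hmul : 0 < n * S1 := hS1n ▸ hR
    rcases mul_pos_iff.mp hmul with ⟨_, h⟩ | ⟨h, _⟩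
    · exact h
    · linarith
  -- the key polynomial identity
  have key : 12 * n ^ 2 * (6 * S1 ^ 2 - 5 * (n + 1) * S2)
      = (12 * n ^ 2 + 46 * n ^ 3 + 68 * n ^ 4 + 48 * n ^ 5 + 16 * n ^ 6 + 2 * n ^ 7)
        + (12 * n ^ 3 + 34 * n ^ 4 + 34 * n ^ 5 + 14 * n ^ 6 + 2 * n ^ 7) * s
        + (8 * n + 16 * n ^ 2 + 4 * n ^ 3 - 9 * n ^ 4 - 6 * n ^ 5 - n ^ 6) * s ^ 2 := by
    rw [hS1c, hS2c, ha, hb, hc, hlam]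
    field_simp [hn0.ne']
    ring
  have key2 : 12 * n ^ 2 * (6 * S1 ^ 2 - 5 * (n + 1) * S2)
      = (8 * n + 28 * n ^ 2 + 50 * n ^ 3 + 59 * n ^ 4 + 42 * n ^ 5 + 15 * n ^ 6 + 2 * n ^ 7)
        + (-16 * n - 32 * n ^ 2 + 4 * n ^ 3 + 52 * n ^ 4 + 46 * n ^ 5 + 16 * n ^ 6 + 2 * n ^ 7) * s := by
    rw [key]
    linear_combination (8 * n + 16 * n ^ 2 + 4 * n ^ 3 - 9 * n ^ 4 - 6 * n ^ 5 - n ^ 6) * hs2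
  have hscoef : (0 : ℝ) ≤ -16 * n - 32 * n ^ 2 + 4 * n ^ 3 + 52 * n ^ 4 + 46 * n ^ 5
      + 16 * n ^ 6 + 2 * n ^ 7 := by nlinarith [pow_pos hn0 3, pow_pos hn0 4, pow_pos hn0 5]
  have hGpos : (0 : ℝ) ≤ 12 * n ^ 2 * (6 * S1 ^ 2 - 5 * (n + 1) * S2) := by
    rw [key2]
    have h1 : (0 : ℝ) ≤ (-16 * n - 32 * n ^ 2 + 4 * n ^ 3 + 52 * n ^ 4 + 46 * n ^ 5
        + 16 * n ^ 6 + 2 * n ^ 7) * s := mul_nonneg hscoef hs0.le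
    linarith [pow_pos hn0 2, pow_pos hn0 3, pow_pos hn0 4, pow_pos hn0 5, pow_pos hn0 6,
      pow_pos hn0 7]
  have hX : 0 ≤ 6 * S1 ^ 2 - 5 * (n + 1) * S2 := by
    have h12 : (0 : ℝ) < 12 * n ^ 2 := by positivity
    exact (mul_nonneg_iff_of_pos_left h12).mp hGpos
  rw [div_le_div_iff₀ (by positivity) (by norm_num : (0:ℝ) < 5)]
  linarith [hX]
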